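/- With the choice (X⊥ᵀX⊥)⁻¹ = Γ₃, one has X⊥(X⊥ᵀA⁻¹X⊥)⁻¹(X⊥ᵀX⊥)(X⊥ᵀA⁻¹X⊥)⁻¹X⊥ᵀ = (A(I_n − XJXᵀA))ᵀ(A(I_n − XJXᵀA)) = (A(I_n − XJXᵀA))², so that M_X = (1/ρ)AXXᵀA + (A(I_n − XJXᵀA))². -/

import Mathlib

open Matrix

theorem stmt_7 {n k : ℕ} (A : Matrix (Fin n) (Fin n) ℝ) (J : Matrix (Fin k) (Fin k) ℝ)
    (hA : Aᵀ = A) (hAinv : IsUnit A.det) (hJ : Jᵀ = J) (hJ2 : J * J = 1)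
    (X : Matrix (Fin n) (Fin k) ℝ) (hX : Xᵀ * A * X = J)
    (Xp : Matrix (Fin n) (Fin (n - k)) ℝ) (hXp : Xp.rank = n - k)
    (hperp : Xᵀ * Xp = 0) (hXpinv : IsUnit (Xpᵀ * A⁻¹ * Xp).det) (ρ : ℝ) (hρ : 0 < ρ) :
    Xp * (Xpᵀ * A⁻¹ * Xp)⁻¹ * (Xpᵀ * Xp) * (Xpᵀ * A⁻¹ * Xp)⁻¹ * Xpᵀ =
        (A * (1 - X * J * Xᵀ * A))ᵀ * (A * (1 - X * J * Xᵀ * A)) ∧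
    Xp * (Xpᵀ * A⁻¹ * Xp)⁻¹ * (Xpᵀ * Xp) * (Xpᵀ * A⁻¹ * Xp)⁻¹ * Xpᵀ =
        (A * (1 - X * J * Xᵀ * A)) ^ 2 ∧
    ρ⁻¹ • (A * X * Xᵀ * A) +
        Xp * (Xpᵀ * A⁻¹ * Xp)⁻¹ * (Xpᵀ * Xp) * (Xpᵀ * A⁻¹ * Xp)⁻¹ * Xpᵀ =
      ρ⁻¹ • (A * X * Xᵀ * A) + (A * (1 - X * J * Xᵀ * A)) ^ 2 := by
  set G := (Xpᵀ * A⁻¹ * Xp)⁻¹ with hG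
  have hAAinv : A * A⁻¹ = 1 := mul_nonsing_inv A hAinv
  have hAinvA2 : A * A⁻¹ = 1 := hAAinv
  have hGmul : G * (Xpᵀ * A⁻¹ * Xp) = 1 := nonsing_inv_mul _ hXpinv
  -- k ≤ n
  have hk : k ≤ n := by
    have hJu : IsUnit J := ⟨⟨J, J, hJ2, hJ2⟩, rfl⟩
    have h1 : J.rank = k := by simpa using Matrix.rank_of_isUnit J hJu
    have h2 : (Xᵀ * A * X).rank ≤ n := by
      calc (Xᵀ * A * X).rank ≤ (Xᵀ * A).rank := rank_mul_le_left _ _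
        _ ≤ (Xᵀ).rank := rank_mul_le_left _ _
        _ ≤ n := by simpa using rank_le_card_width Xᵀ
    rw [hX, h1] at h2
    exact h2
  have e : Fin n ≃ Fin k ⊕ Fin (n - k) :=
    (finCongr (Nat.add_sub_cancel' hk).symm).trans finSumFinEquiv.symm
  -- key decomposition : C * E = 1 via E * C = 1
  have key : fromCols X (A⁻¹ * Xp) * fromRows (J * Xᵀ * A) (G * Xpᵀ) = 1 := by
    rw [fromCols_mul_fromRows_eq_one_comm e, fromRows_mul_fromCols]
    have b11 : J * Xᵀ * A * X = 1 := by
      rw [Matrix.mul_assoc, Matrix.mul_assoc, ← Matrix.mul_assoc Xᵀ, hX, hJ2]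
    have b12 : J * Xᵀ * A * (A⁻¹ * Xp) = 0 := by
      rw [Matrix.mul_assoc, Matrix.mul_assoc, ← Matrix.mul_assoc A, hAAinv,
        Matrix.one_mul, hperp, Matrix.mul_zero]
    have b21 : G * Xpᵀ * X = 0 := by
      have h0 : Xpᵀ * X = 0 := by
        have := congrArg transpose hperp
        simpa using this
      rw [Matrix.mul_assoc, h0, Matrix.mul_zero]
    have b22 : G * Xpᵀ * (A⁻¹ * Xp) = 1 := by
      rw [Matrix.mul_assoc, ← Matrix.mul_assoc Xpᵀ, hGmul]
    rw [b11, b12, b21, b22, fromBlocks_one]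
  have decomp : X * (J * Xᵀ * A) + A⁻¹ * Xp * (G * Xpᵀ) = 1 := by
    rw [← fromCols_mul_fromRows, key]
  -- the main identity  A(1 - XJXᵀA) = Xp G Xpᵀ
  have main : A * (1 - X * J * Xᵀ * A) = Xp * G * Xpᵀ := by
    have h1 : (1 : Matrix (Fin n) (Fin n) ℝ) - X * J * Xᵀ * A = A⁻¹ * Xp * (G * Xpᵀ) := by
      rw [← decomp, ← Matrix.mul_assoc, ← Matrix.mul_assoc]
      abel
    rw [h1, ← Matrix.mul_assoc, ← Matrix.mul_assoc A, hAinvA2, Matrix.one_mul,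
      Matrix.mul_assoc]
  -- symmetry of G
  have hGsymm : Gᵀ = G := by
    rw [hG, Matrix.transpose_nonsing_inv]
    congr 1
    rw [transpose_mul, transpose_mul, transpose_transpose, Matrix.transpose_nonsing_inv, hA,
      Matrix.mul_assoc]
  have hSsymm : (Xp * G * Xpᵀ)ᵀ = Xp * G * Xpᵀ := by
    rw [transpose_mul, transpose_mul, transpose_transpose, hGsymm, ← Matrix.mul_assoc]
  have hLHS : Xp * G * (Xpᵀ * Xp) * G * Xpᵀ = (Xp * G * Xpᵀ) * (Xp * G * Xpᵀ) := by
    simp only [Matrix.mul_assoc]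
  have h2 : Xp * G * (Xpᵀ * Xp) * G * Xpᵀ = (A * (1 - X * J * Xᵀ * A)) ^ 2 := by
    rw [hLHS, main, sq]
  refine ⟨?_, h2, by rw [h2]⟩
  rw [hLHS, main, hSsymm]
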